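/- Let R be an inner McCoy ring and S a multiplicatively closed subset of R consisting of central regular (non-zero-divisor) elements. Then the localization S⁻¹R is inner McCoy. -/

import Mathlib

def IsInnerMcCoy (S : Type*) [Ring S] : Prop :=
  ∀ f g : Polynomial S, f ≠ 0 → g ≠ 0 → f * g * f = 0 →
    ∃ r : S, r ≠ 0 ∧ f * Polynomial.C r * f = 0

section Aux

open OreLocalization Polynomial

variable {R : Type*} [Ring R] {S : Submonoid R} [OreLocalization.OreSet S]

/-- Image of a central element of `S` is central in the Ore localization. -/
lemma aux_central (hcent : ∀ s ∈ S, s ∈ Set.center R) (s : S) :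
    ∀ x : OreLocalization S R,
      OreLocalization.numeratorRingHom (s : R) * x = x * OreLocalization.numeratorRingHom (s : R) := by
  intro x
  induction x using OreLocalization.ind with
  | _ r t =>
    have hs : ∀ b : R, b * (s : R) = (s : R) * b := fun b =>
      ((Set.mem_center_iff.mp (hcent s s.2)).comm b).symm
    have h1 : OreLocalization.numeratorRingHom (s : R) = (s : R) /ₒ (1 : S) := rfl
    rw [h1, OreLocalization.mul_div_one,
      OreLocalization.oreDiv_mul_char (s : R) r 1 t (s : R) t (hs (t : R))]
    rw [mul_one, ← hs r]

/-- `C u` is central in the polynomial ring when `u` is central. -/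
lemma aux_C_central {A : Type*} [Ring A] {u : A} (hu : ∀ x : A, u * x = x * u)
    (p : Polynomial A) : Polynomial.C u * p = p * Polynomial.C u := by
  ext n
  rw [Polynomial.coeff_C_mul, Polynomial.coeff_mul_C, hu]

/-- Common denominator lemma: any polynomial over the localization becomes the image of
a polynomial over `R` after multiplying by `C` of a denominator. -/
lemma aux_common_denom (hcent : ∀ s ∈ S, s ∈ Set.center R)
    (p : Polynomial (OreLocalization S R)) :
    ∃ (s : S) (F : Polynomial R),
      p * Polynomial.C (OreLocalization.numeratorRingHom (s : R)) =
        F.map OreLocalization.numeratorRingHom := by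
  induction p using Polynomial.induction_on' with
  | monomial n a =>
    induction a using OreLocalization.ind with
    | _ r t =>
      refine ⟨t, Polynomial.monomial n r, ?_⟩
      have hs : ∀ b : R, b * (t : R) = (t : R) * b := fun b =>
        ((Set.mem_center_iff.mp (hcent t t.2)).comm b).symm
      have h1 : OreLocalization.numeratorRingHom (t : R) = (t : R) /ₒ (1 : S) := rfl
      have key : (r /ₒ t) * ((t : R) /ₒ (1 : S)) = r /ₒ (1 : S) := by
        rw [OreLocalization.mul_div_one]
        have := OreLocalization.expand' r (1 : S) t
        rw [mul_one] at this
        rw [this]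
        congr 1
        rw [Submonoid.smul_def, smul_eq_mul, ← hs r]
      rw [Polynomial.monomial_mul_C, h1, key, Polynomial.map_monomial]
      rfl
  | add p q ihp ihq =>
    obtain ⟨s, F, hF⟩ := ihp
    obtain ⟨t, G, hG⟩ := ihq
    refine ⟨s * t, F * Polynomial.C (t : R) + G * Polynomial.C (s : R), ?_⟩
    have hst : ((s * t : S) : R) = (s : R) * (t : R) := rfl
    have hmul : (OreLocalization.numeratorRingHom (S := S)) ((s * t : S) : R) =
        (OreLocalization.numeratorRingHom (S := S)) (s : R) *
          (OreLocalization.numeratorRingHom (S := S)) (t : R) := by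
      rw [hst, map_mul]
    have hcomm : (OreLocalization.numeratorRingHom (S := S)) (s : R) *
        (OreLocalization.numeratorRingHom (S := S)) (t : R) =
        (OreLocalization.numeratorRingHom (S := S)) (t : R) *
          (OreLocalization.numeratorRingHom (S := S)) (s : R) :=
      aux_central hcent s _
    rw [hmul, map_mul, Polynomial.map_add, Polynomial.map_mul, Polynomial.map_mul,
      Polynomial.map_C, Polynomial.map_C, ← hF, ← hG, add_mul]
    congr 1
    · rw [mul_assoc]
    · rw [← Polynomial.C_mul, hcomm, Polynomial.C_mul, ← mul_assoc]

end Aux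

/-- If `R` is inner McCoy and `S` is a multiplicatively closed set of central regular
elements of `R`, then the localization `S⁻¹R` is inner McCoy. -/
theorem oreLocalization_innerMcCoy (R : Type*) [Ring R] (S : Submonoid R)
    [OreLocalization.OreSet S]
    (hcent : ∀ s ∈ S, s ∈ Set.center R)
    (hreg : ∀ s ∈ S, s ∈ nonZeroDivisors R)
    (h : IsInnerMcCoy R) : IsInnerMcCoy (OreLocalization S R) := by
  intro f g hf hg hfgf
  set φ : R →+* OreLocalization S R := OreLocalization.numeratorRingHom with hφ
  have hinj : Function.Injective φ := by
    intro a b hab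
    exact OreLocalization.numeratorHom_inj
      (fun x hx y hy => (hreg x hx).2 y
        (by rwa [(Set.mem_center_iff.mp (hcent x hx)).comm y] at hy)) hab
  have hpinj : Function.Injective (Polynomial.map φ) := Polynomial.map_injective φ hinj
  obtain ⟨s, F, hF⟩ := aux_common_denom hcent f
  obtain ⟨t, G, hG⟩ := aux_common_denom hcent g
  set u : Polynomial (OreLocalization S R) := Polynomial.C (φ (s : R)) with hu_def
  set v : Polynomial (OreLocalization S R) := Polynomial.C (φ (t : R)) with hv_def
  have hu : IsUnit u := (OreLocalization.numerator_isUnit s).map Polynomial.C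
  have hv : IsUnit v := (OreLocalization.numerator_isUnit t).map Polynomial.C
  have hucomm : ∀ p, u * p = p * u := aux_C_central (aux_central hcent s)
  have hvcomm : ∀ p, v * p = p * v := aux_C_central (aux_central hcent t)
  have swapu : ∀ a b : Polynomial (OreLocalization S R), a * u * b = a * b * u := by
    intro a b; rw [mul_assoc, hucomm, ← mul_assoc]
  have swapv : ∀ a b : Polynomial (OreLocalization S R), a * v * b = a * b * v := by
    intro a b; rw [mul_assoc, hvcomm, ← mul_assoc]
  have hFne : F ≠ 0 := by
    intro h0
    apply hf
    have : f * u = 0 := by rw [hF, h0, Polynomial.map_zero]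
    exact (IsUnit.mul_left_eq_zero hu).mp this
  have hGne : G ≠ 0 := by
    intro h0
    apply hg
    have : g * v = 0 := by rw [hG, h0, Polynomial.map_zero]
    exact (IsUnit.mul_left_eq_zero hv).mp this
  have hFGF : F * G * F = 0 := by
    apply hpinj
    rw [Polynomial.map_mul, Polynomial.map_mul, Polynomial.map_zero, ← hF, ← hG]
    calc f * u * (g * v) * (f * u)
        = f * (g * v) * u * (f * u) := by rw [swapu f (g * v)]
      _ = f * (g * v) * (f * u) * u := by rw [swapu (f * (g * v)) (f * u)]
      _ = f * g * v * (f * u) * u := by rw [← mul_assoc f g v]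
      _ = f * g * (f * u) * v * u := by rw [swapv (f * g) (f * u)]
      _ = f * g * f * u * v * u := by rw [← mul_assoc (f * g) f u]
      _ = 0 := by rw [hfgf, zero_mul, zero_mul, zero_mul]
  obtain ⟨c, hc0, hc⟩ := h F G hFne hGne hFGF
  refine ⟨φ c, fun h0 => hc0 (hinj (by rw [h0, map_zero])), ?_⟩
  have hmap : f * u * Polynomial.C (φ c) * (f * u) = 0 := by
    have := congrArg (Polynomial.map φ) hc
    rw [Polynomial.map_mul, Polynomial.map_mul, Polynomial.map_C, Polynomial.map_zero,
      ← hF] at this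
    exact this
  have hrearr : f * u * Polynomial.C (φ c) * (f * u) =
      f * Polynomial.C (φ c) * f * (u * u) := by
    calc f * u * Polynomial.C (φ c) * (f * u)
        = f * Polynomial.C (φ c) * u * (f * u) := by rw [swapu f (Polynomial.C (φ c))]
      _ = f * Polynomial.C (φ c) * (f * u) * u := by
          rw [swapu (f * Polynomial.C (φ c)) (f * u)]
      _ = f * Polynomial.C (φ c) * f * (u * u) := by
          rw [← mul_assoc (f * Polynomial.C (φ c)) f u, mul_assoc _ u u]
  rw [hrearr] at hmap
  exact (IsUnit.mul_left_eq_zero (hu.mul hu)).mp hmap
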